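/- Let f, g : ℝ^p × ℝ^d → ℝ be differentiable, λ > 0, and suppose Φ := f + λ·g has L_Φ-Lipschitz gradient (L_Φ > 0). Fix 0 < α ≤ 1/L_Φ and constants L ≥ 0, L_g > 0. Let θ = (W, x), let θ⁺ := θ − α·∇Φ(θ), and suppose x* ∈ ℝ^d satisfies ∇_x g(W, x*) = 0. Suppose further that z ∈ ℝ^d and t ≥ 1 satisfy the correction-error bound 4·λ²·‖∇_W g(W, x*) − ∇_W g(W, z)‖² ≤ (1/(2α²))·‖θ⁺ − θ‖² + 2·L²·L_g²/(α²·t²). Then ‖∇f(θ) + λ·(∇g(θ) − ∇g(W, x*))‖² ≤ (5/α)·(Φ(θ) − Φ(θ⁺)) + 2·L²·L_g²/(α²·t²) + 4·λ²·‖∇_W g(W, z)‖². -/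

import Mathlib

/-- The point `(W, x)` of the product Hilbert space `ℝ^p × ℝ^d` (with the ℓ² product
norm `‖(u,v)‖² = ‖u‖² + ‖v‖²`). -/
noncomputable def pairL2 {E F : Type*} [NormedAddCommGroup E] [NormedAddCommGroup F]
    (a : E) (b : F) : WithLp 2 (E × F) := (WithLp.equiv 2 (E × F)).symm (a, b)

section AuxLemmas

open InnerProductSpace intervalIntegral

local notation "⟪" x ", " y "⟫" => @inner ℝ _ _ x y

private lemma inner_gradient_eq' {E : Type*} [NormedAddCommGroup E] [InnerProductSpace ℝ E]
    [CompleteSpace E] (F : E → ℝ) (x v : E) :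
    ⟪gradient F x, v⟫ = fderiv ℝ F x v := by
  rw [gradient, toDual_symm_apply]

private lemma descent_lemma {E : Type*} [NormedAddCommGroup E] [InnerProductSpace ℝ E]
    [CompleteSpace E] (F : E → ℝ) (hF : Differentiable ℝ F) (L : ℝ) (hL : 0 ≤ L)
    (hLip : ∀ a b, ‖gradient F a - gradient F b‖ ≤ L * ‖a - b‖) (x y : E) :
    F y ≤ F x + ⟪gradient F x, y - x⟫ + L / 2 * ‖y - x‖ ^ 2 := by
  set v := y - x with hv
  have hderiv : ∀ s : ℝ, HasDerivAt (fun s : ℝ => F (x + s • v))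
      ⟪gradient F (x + s • v), v⟫ s := by
    intro s
    have h1 : HasFDerivAt F (fderiv ℝ F (x + s • v)) (x + s • v) := (hF _).hasFDerivAt
    have h2 : HasDerivAt (fun s : ℝ => x + s • v) v s := by
      simpa using ((hasDerivAt_id s).smul_const v).const_add x
    have := h1.comp_hasDerivAt s h2
    rw [inner_gradient_eq']; exact this
  have hgc : Continuous (gradient F) := by
    have : LipschitzWith (Real.toNNReal L) (gradient F) := by
      apply LipschitzWith.of_dist_le_mul
      intro a b
      rw [dist_eq_norm, dist_eq_norm]
      simpa [Real.coe_toNNReal L hL] using hLip a b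
    exact this.continuous
  have hcont : Continuous fun s : ℝ => ⟪gradient F (x + s • v), v⟫ :=
    Continuous.inner (hgc.comp (by continuity)) continuous_const
  have hFT : ∫ s in (0:ℝ)..1, ⟪gradient F (x + s • v), v⟫ = F y - F x := by
    have := integral_eq_sub_of_hasDerivAt (f := fun s : ℝ => F (x + s • v))
      (fun s _ => hderiv s) (hcont.intervalIntegrable 0 1)
    simpa [hv] using this
  have hmono : ∫ s in (0:ℝ)..1, ⟪gradient F (x + s • v), v⟫ ≤
      ∫ s in (0:ℝ)..1, (⟪gradient F x, v⟫ + (L * ‖v‖ ^ 2) * s) := by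
    apply integral_mono_on zero_le_one (hcont.intervalIntegrable 0 1)
      ((continuous_const.add (continuous_const.mul continuous_id)).intervalIntegrable 0 1)
    intro s hs
    have h1 : ⟪gradient F (x + s • v) - gradient F x, v⟫ ≤
        ‖gradient F (x + s • v) - gradient F x‖ * ‖v‖ := real_inner_le_norm _ _
    have h2 : ‖gradient F (x + s • v) - gradient F x‖ ≤ L * (s * ‖v‖) := by
      have := hLip (x + s • v) x
      simpa [norm_smul, Real.norm_eq_abs, abs_of_nonneg hs.1] using this
    have h3 : ⟪gradient F (x + s • v) - gradient F x, v⟫ =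
        ⟪gradient F (x + s • v), v⟫ - ⟪gradient F x, v⟫ := inner_sub_left _ _ _
    show ⟪gradient F (x + s • v), v⟫ ≤ ⟪gradient F x, v⟫ + (L * ‖v‖ ^ 2) * s
    nlinarith [norm_nonneg v]
  have hRHS : ∫ s in (0:ℝ)..1, (⟪gradient F x, v⟫ + (L * ‖v‖ ^ 2) * s) =
      ⟪gradient F x, v⟫ + L / 2 * ‖v‖ ^ 2 := by
    rw [integral_add (intervalIntegrable_const)
      ((intervalIntegral.intervalIntegrable_id).const_mul _),
      integral_const, integral_const_mul, integral_id]
    rw [smul_eq_mul]; ring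
  have := hFT ▸ (hRHS ▸ hmono)
  linarith

variable {E F : Type*} [NormedAddCommGroup E] [InnerProductSpace ℝ E]
    [NormedAddCommGroup F] [InnerProductSpace ℝ F] [CompleteSpace E] [CompleteSpace F]

private lemma gradient_comp_fst (g : WithLp 2 (E × F) → ℝ) (hg : Differentiable ℝ g)
    (W : E) (b : F) :
    gradient (fun W' => g (pairL2 W' b)) W = (gradient g (pairL2 W b)).fst := by
  set pt := pairL2 W b with hpt
  set incl : E →L[ℝ] WithLp 2 (E × F) :=
    ((WithLp.prodContinuousLinearEquiv 2 ℝ E F).symm.toContinuousLinearMap).comp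
      (ContinuousLinearMap.inl ℝ E F) with hincl
  have hmap : HasFDerivAt (fun W' : E => pairL2 W' b) incl W := by
    have heq : (fun W' : E => pairL2 W' b) = fun W' => incl W' + pairL2 0 b := by
      funext u
      show WithLp.toLp 2 (u, b) = WithLp.toLp 2 (u, (0 : F)) + WithLp.toLp 2 ((0 : E), b)
      rw [← WithLp.toLp_add, Prod.mk_add_mk]
      simp
    rw [heq]
    exact incl.hasFDerivAt.add_const _
  have hcomp : HasFDerivAt (fun W' => g (pairL2 W' b)) ((fderiv ℝ g pt).comp incl) W :=
    (hg pt).hasFDerivAt.comp W hmap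
  have hgrad := (hasFDerivAt_iff_hasGradientAt.mp hcomp).gradient
  rw [hgrad]
  apply ext_inner_right ℝ
  intro u
  rw [toDual_symm_apply]
  have h1 : ((fderiv ℝ g pt).comp incl) u = fderiv ℝ g pt (incl u) := rfl
  rw [h1, ← inner_gradient_eq', WithLp.prod_inner_apply]
  have h2 : (incl u).fst = u := rfl
  have h3 : (incl u).snd = (0 : F) := rfl
  simp only [WithLp.ofLp_fst, WithLp.ofLp_snd]
  rw [h2, h3, inner_zero_right, add_zero]

private lemma gradient_comp_snd (g : WithLp 2 (E × F) → ℝ) (hg : Differentiable ℝ g)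
    (a : E) (x : F) :
    gradient (fun y => g (pairL2 a y)) x = (gradient g (pairL2 a x)).snd := by
  set pt := pairL2 a x with hpt
  set incl : F →L[ℝ] WithLp 2 (E × F) :=
    ((WithLp.prodContinuousLinearEquiv 2 ℝ E F).symm.toContinuousLinearMap).comp
      (ContinuousLinearMap.inr ℝ E F) with hincl
  have hmap : HasFDerivAt (fun y : F => pairL2 a y) incl x := by
    have heq : (fun y : F => pairL2 a y) = fun y => incl y + pairL2 a 0 := by
      funext u
      show WithLp.toLp 2 (a, u) = WithLp.toLp 2 ((0 : E), u) + WithLp.toLp 2 (a, (0 : F))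
      rw [← WithLp.toLp_add, Prod.mk_add_mk]
      simp
    rw [heq]
    exact incl.hasFDerivAt.add_const _
  have hcomp : HasFDerivAt (fun y => g (pairL2 a y)) ((fderiv ℝ g pt).comp incl) x :=
    (hg pt).hasFDerivAt.comp x hmap
  have hgrad := (hasFDerivAt_iff_hasGradientAt.mp hcomp).gradient
  rw [hgrad]
  apply ext_inner_right ℝ
  intro u
  rw [toDual_symm_apply]
  have h1 : ((fderiv ℝ g pt).comp incl) u = fderiv ℝ g pt (incl u) := rfl
  rw [h1, ← inner_gradient_eq', WithLp.prod_inner_apply]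
  have h2 : (incl u).snd = u := rfl
  have h3 : (incl u).fst = (0 : E) := rfl
  simp only [WithLp.ofLp_fst, WithLp.ofLp_snd]
  rw [h2, h3, inner_zero_right, zero_add]

private lemma sq_bound' (A B c C : ℝ) (hA : 0 ≤ A) (hc : 0 ≤ c) (_hC : 0 ≤ C)
    (h : A ≤ B + c * C) : A ^ 2 ≤ 2 * B ^ 2 + 2 * c ^ 2 * C ^ 2 := by
  nlinarith [sq_nonneg (B - c * C), sq_nonneg (B + c * C), mul_nonneg hc _hC]

private lemma sq_bound'' (A B C : ℝ) (hA : 0 ≤ A) (h : A ≤ B + C) (_hB : 0 ≤ B) (_hC : 0 ≤ C) :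
    A ^ 2 ≤ 2 * B ^ 2 + 2 * C ^ 2 := by
  nlinarith [sq_nonneg (B - C), sq_nonneg (B + C)]

end AuxLemmas

/-- Per-step bound for the penalized bilevel gradient: if `Φ = f + λg` has
`L_Φ`-Lipschitz gradient, `0 < α ≤ 1/L_Φ`, `θ⁺ = θ − α∇Φ(θ)`, `∇_x g(W,x*) = 0`, and the
correction error satisfies
`4λ²‖∇_W g(W,x*) − ∇_W g(W,z)‖² ≤ ‖θ⁺ − θ‖²/(2α²) + 2L²L_g²/(α²t²)`, then
`‖∇f(θ) + λ(∇g(θ) − ∇g(W,x*))‖² ≤ (5/α)(Φ(θ) − Φ(θ⁺)) + 2L²L_g²/(α²t²) + 4λ²‖∇_W g(W,z)‖²`. -/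
theorem per_step_penalized_grad_bound (p d : ℕ)
    (f g : WithLp 2 (EuclideanSpace ℝ (Fin p) × EuclideanSpace ℝ (Fin d)) → ℝ)
    (hf : Differentiable ℝ f) (hg : Differentiable ℝ g)
    (lam : ℝ) (hlam : 0 < lam)
    (Φ : WithLp 2 (EuclideanSpace ℝ (Fin p) × EuclideanSpace ℝ (Fin d)) → ℝ)
    (hΦdef : ∀ θ, Φ θ = f θ + lam * g θ)
    (LΦ : ℝ) (hLΦ : 0 < LΦ)
    (hLip : ∀ θ θ', ‖gradient Φ θ - gradient Φ θ'‖ ≤ LΦ * ‖θ - θ'‖)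
    (α : ℝ) (hα0 : 0 < α) (hα1 : α ≤ 1 / LΦ)
    (L : ℝ) (hL : 0 ≤ L) (Lg : ℝ) (hLg : 0 < Lg)
    (W : EuclideanSpace ℝ (Fin p)) (x : EuclideanSpace ℝ (Fin d))
    (θ θplus : WithLp 2 (EuclideanSpace ℝ (Fin p) × EuclideanSpace ℝ (Fin d)))
    (hθ : θ = pairL2 W x)
    (hθplus : θplus = θ - α • gradient Φ θ)
    (xstar : EuclideanSpace ℝ (Fin d))
    (hstat : gradient (fun y => g (pairL2 W y)) xstar = 0)
    (z : EuclideanSpace ℝ (Fin d)) (t : ℕ) (ht : 1 ≤ t)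
    (hcorr : 4 * lam ^ 2 * ‖gradient (fun W' => g (pairL2 W' xstar)) W -
          gradient (fun W' => g (pairL2 W' z)) W‖ ^ 2 ≤
        (1 / (2 * α ^ 2)) * ‖θplus - θ‖ ^ 2 + 2 * L ^ 2 * Lg ^ 2 / (α ^ 2 * (t : ℝ) ^ 2)) :
    ‖gradient f θ + lam • (gradient g θ - gradient g (pairL2 W xstar))‖ ^ 2 ≤
      (5 / α) * (Φ θ - Φ θplus) + 2 * L ^ 2 * Lg ^ 2 / (α ^ 2 * (t : ℝ) ^ 2)
        + 4 * lam ^ 2 * ‖gradient (fun W' => g (pairL2 W' z)) W‖ ^ 2 := by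
  set G := gradient Φ θ with hG
  set Gr := gradient g (pairL2 W xstar) with hGr
  set gz := gradient (fun W' => g (pairL2 W' z)) W with hgz
  clear_value G Gr gz
  have hΦfun : Φ = fun θ => f θ + lam * g θ := funext hΦdef
  have hΦdiff : Differentiable ℝ Φ := by
    rw [hΦfun]; exact hf.add (hg.const_mul lam)
  -- gradient of the sum
  have hGsum : G = gradient f θ + lam • gradient g θ := by
    apply ext_inner_right ℝ
    intro u
    rw [hG, inner_gradient_eq']
    have hfd : fderiv ℝ Φ θ = fderiv ℝ f θ + lam • fderiv ℝ g θ := by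
      rw [hΦfun, fderiv_fun_add (hf θ) ((hg θ).const_mul lam), fderiv_const_mul (hg θ) lam]
    rw [hfd]
    simp only [ContinuousLinearMap.add_apply, ContinuousLinearMap.coe_smul',
      Pi.smul_apply, smul_eq_mul, inner_add_left, real_inner_smul_left]
    rw [inner_gradient_eq', inner_gradient_eq']
  -- components of Gr
  have hGr2 : Gr.snd = 0 := by
    rw [hGr, ← gradient_comp_snd g hg W xstar]; exact hstat
  have hGr1 : gradient (fun W' => g (pairL2 W' xstar)) W = Gr.fst := by
    rw [hGr]; exact gradient_comp_fst g hg W xstar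
  have hGrnorm : ‖Gr‖ ^ 2 = ‖Gr.fst‖ ^ 2 := by
    rw [WithLp.prod_norm_sq_eq_of_L2, hGr2]
    simp
  -- step identity
  have hstep : θplus - θ = -(α • G) := by
    rw [hθplus]; abel
  have hstepnorm : ‖θplus - θ‖ ^ 2 = α ^ 2 * ‖G‖ ^ 2 := by
    rw [hstep, norm_neg, norm_smul, Real.norm_eq_abs, abs_of_pos hα0, mul_pow]
  -- descent
  have hdesc := descent_lemma Φ hΦdiff LΦ hLΦ.le hLip θ θplus
  rw [← hG] at hdesc
  have hinner : (inner ℝ G (θplus - θ) : ℝ) = -(α * ‖G‖ ^ 2) := by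
    rw [hstep, inner_neg_right, real_inner_smul_right, real_inner_self_eq_norm_sq]
  have hαL : α * LΦ ≤ 1 := (le_div_iff₀ hLΦ).mp hα1
  have hG2 : α * ‖G‖ ^ 2 ≤ 2 * (Φ θ - Φ θplus) := by
    rw [hinner, hstepnorm] at hdesc
    have hkey : 0 ≤ α * ‖G‖ ^ 2 * (1 - α * LΦ) :=
      mul_nonneg (mul_nonneg hα0.le (sq_nonneg _)) (by linarith)
    linarith [hkey, hdesc]
  have h5 : (5 : ℝ) / 2 * ‖G‖ ^ 2 ≤ (5 / α) * (Φ θ - Φ θplus) := by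
    have hpos : (0:ℝ) ≤ 5 / (2 * α) := by positivity
    have h := mul_le_mul_of_nonneg_left hG2 hpos
    calc (5:ℝ)/2 * ‖G‖ ^ 2 = 5/(2*α) * (α * ‖G‖ ^ 2) := by field_simp
    _ ≤ 5/(2*α) * (2 * (Φ θ - Φ θplus)) := h
    _ = (5/α) * (Φ θ - Φ θplus) := by field_simp
  -- triangle bounds
  have hveq : gradient f θ + lam • (gradient g θ - Gr) = G - lam • Gr := by
    rw [hGsum, smul_sub]; abel
  have habs : ‖gradient f θ + lam • (gradient g θ - Gr)‖ ^ 2 ≤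
      2 * ‖G‖ ^ 2 + 2 * lam ^ 2 * ‖Gr.fst‖ ^ 2 := by
    rw [hveq, ← hGrnorm]
    have h2 : ‖lam • Gr‖ = lam * ‖Gr‖ := by
      rw [norm_smul, Real.norm_eq_abs, abs_of_pos hlam]
    have h1 : ‖G - lam • Gr‖ ≤ ‖G‖ + lam * ‖Gr‖ := h2 ▸ norm_sub_le _ _
    exact sq_bound' _ _ _ _ (norm_nonneg _) hlam.le (norm_nonneg _) h1
  have htri : ‖Gr.fst‖ ^ 2 ≤ 2 * ‖Gr.fst - gz‖ ^ 2 + 2 * ‖gz‖ ^ 2 := by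
    have h1 : ‖Gr.fst‖ ≤ ‖Gr.fst - gz‖ + ‖gz‖ := by
      simpa using norm_add_le (Gr.fst - gz) gz
    exact sq_bound'' _ _ _ (norm_nonneg _) h1 (norm_nonneg _) (norm_nonneg _)
  -- correction bound
  rw [hGr1, hstepnorm] at hcorr
  have hhalf : (1 / (2 * α ^ 2)) * (α ^ 2 * ‖G‖ ^ 2) = ‖G‖ ^ 2 / 2 := by
    field_simp
  rw [hhalf] at hcorr
  have hlam2 : (0 : ℝ) ≤ 2 * lam ^ 2 := by positivity
  have htri' := mul_le_mul_of_nonneg_left htri hlam2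
  linarith
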